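/- Let d = d_N + d_R with d_N ∈ ker(J), d_R ∈ ker(J)⊥, and suppose (JᵀJ + λ LᵀL)d = −JᵀF with λ > 0 and ker(J) ∩ ker(L) = {0}, and d ∉ ker(J) with d_N ≠ 0. Then ‖L d_N‖² = −(L d_N)ᵀ(L d_R), and consequently ‖L d_N‖ ≤ ‖L d_R‖. -/

import Mathlib

open ContinuousLinearMap
open scoped RealInnerProductSpace

theorem LM_null_component_bound {n m p : ℕ}
    (J : EuclideanSpace ℝ (Fin n) →L[ℝ] EuclideanSpace ℝ (Fin m))
    (L : EuclideanSpace ℝ (Fin n) →L[ℝ] EuclideanSpace ℝ (Fin p))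
    (F : EuclideanSpace ℝ (Fin m)) (lam : ℝ) (hlam : 0 < lam)
    (hker : LinearMap.ker (J : EuclideanSpace ℝ (Fin n) →ₗ[ℝ] EuclideanSpace ℝ (Fin m)) ⊓ LinearMap.ker (L : EuclideanSpace ℝ (Fin n) →ₗ[ℝ] EuclideanSpace ℝ (Fin p)) = ⊥)
    (d dN dR : EuclideanSpace ℝ (Fin n))
    (hd : d = dN + dR)
    (hdN : dN ∈ LinearMap.ker (J : EuclideanSpace ℝ (Fin n) →ₗ[ℝ] EuclideanSpace ℝ (Fin m))) (hdR : dR ∈ (LinearMap.ker (J : EuclideanSpace ℝ (Fin n) →ₗ[ℝ] EuclideanSpace ℝ (Fin m)) : Submodule ℝ _)ᗮ)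
    (hsol : ((adjoint J).comp J + lam • (adjoint L).comp L) d = -(adjoint J F))
    (hdnotker : d ∉ LinearMap.ker (J : EuclideanSpace ℝ (Fin n) →ₗ[ℝ] EuclideanSpace ℝ (Fin m))) (hdN0 : dN ≠ 0) :
    ‖L dN‖ ^ 2 = -⟪L dN, L dR⟫ ∧ ‖L dN‖ ≤ ‖L dR‖ := by
  have hJdN : J dN = 0 := hdN
  have key : ⟪dN, ((adjoint J).comp J + lam • (adjoint L).comp L) d⟫ = ⟪dN, -(adjoint J F)⟫ := by
    rw [hsol]
  have h1 : ⟪dN, -(adjoint J F)⟫ = 0 := by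
    rw [inner_neg_right, ← adjoint_inner_left]
    simp [hJdN]
  have h2 : ⟪dN, ((adjoint J).comp J + lam • (adjoint L).comp L) d⟫
      = lam * (‖L dN‖ ^ 2 + ⟪L dN, L dR⟫) := by
    rw [add_apply, comp_apply, smul_apply, comp_apply, inner_add_right,
      adjoint_inner_right, hJdN, inner_zero_left, inner_smul_right, adjoint_inner_right,
      hd, map_add, inner_add_right, real_inner_self_eq_norm_sq]
    ring
  have heq : ‖L dN‖ ^ 2 + ⟪L dN, L dR⟫ = 0 := by
    have := key
    rw [h1, h2] at this
    exact (mul_eq_zero.mp this).resolve_left (ne_of_gt hlam)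
  have h3 : ‖L dN‖ ^ 2 = -⟪L dN, L dR⟫ := by linarith
  refine ⟨h3, ?_⟩
  rcases eq_or_ne (L dN) 0 with h | h
  · simp [h]
  · have hpos : 0 < ‖L dN‖ := norm_pos_iff.mpr h
    have hcs : -⟪L dN, L dR⟫ ≤ ‖L dN‖ * ‖L dR‖ := by
      have := abs_real_inner_le_norm (L dN) (L dR)
      have := neg_abs_le ⟪L dN, L dR⟫
      linarith
    have : ‖L dN‖ ^ 2 ≤ ‖L dN‖ * ‖L dR‖ := by rw [h3]; exact hcs
    nlinarith
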